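/- Let M, N ≥ 1 and d = 2^n. Let |C⟩ be a vector in P_C ⊗ P_T ⊗ (⊗_{i=1}^M I_i ⊗ O_i) ⊗ (⊗_{j=1}^N I′_j ⊗ O′_j) ⊗ F_C ⊗ F_T (all n-qubit factors ≅ ℂ^d; P_C, F_C ≅ ℂ²). Suppose that for all (M+N)-tuples of n-qubit unitaries (U_1,…,U_M,V_1,…,V_N) one has |C⟩ ∗ (|U_1⟩⟩ ⊗ ⋯ ⊗ |U_M⟩⟩ ⊗ |V_1⟩⟩ ⊗ ⋯ ⊗ |V_N⟩⟩) = Σ_{k=1}^M Σ_{l=1}^N ξ̃_{kl} |S_SWITCH⟩ ∗ (|U_k⟩⟩^{I_k O_k} ⊗ |V_l⟩⟩^{I′_l O′_l}), where each coefficient ξ̃_{kl}(U_1,…,U_M,V_1,…,V_N) ∈ ℂ does not depend on U_k or V_l and is the restriction to unitary arguments of a function multilinear in the matrices (U_i)_{i≠k} and (V_j)_{j≠l}. Then there exist fixed vectors |ξ̃_{kl}⟩ ∈ (⊗_{i≠k} I_i ⊗ O_i) ⊗ (⊗_{j≠l} I′_j ⊗ O′_j), independent of all the unitaries, such that |C⟩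 = Σ_{k=1}^M Σ_{l=1}^N |S_SWITCH⟩^{P F I_k O_k I′_l O′_l} ⊗ |ξ̃_{kl}⟩ (up to the canonical reordering of tensor factors). -/

import Mathlib

/-- Index of `ℂ^d` with `d = 2^n`. -/
abbrev Dix (n : ℕ) := Fin (2 ^ n)
/-- Index of a slot `I ⊗ O` (two copies of `ℂ^{2^n}`). -/
abbrev Sl (n : ℕ) := Dix n × Dix n
/-- Index of `P = P_C ⊗ P_T` (resp. `F = F_C ⊗ F_T`): `ℂ² ⊗ ℂ^{2^n}`. -/
abbrev PFix (n : ℕ) := Fin 2 × Dix n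

/-- Choi vector `|A⟩⟩ = Σ_i e_i ⊗ A e_i`: component at `(i, j)` is `A j i`. -/
noncomputable def choiV {n : ℕ} (A : Matrix (Dix n) (Dix n) ℂ) : Sl n → ℂ :=
  fun x => A x.2 x.1

/-- Component of the switch Choi vector `|S_SWITCH⟩` at `P`-index `p`, `(I,O)`-index `io`,
`(I′,O′)`-index `jo` and `F`-index `f`:
`|S⟩ = |0⟩|0⟩|1⟩⟩^{P_T I}|1⟩⟩^{O I′}|1⟩⟩^{O′ F_T} + |1⟩|1⟩|1⟩⟩^{P_T I′}|1⟩⟩^{O′ I}|1⟩⟩^{O F_T}`. -/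
noncomputable def swVec {n : ℕ} (p : PFix n) (io jo : Sl n) (f : PFix n) : ℂ :=
  (if p.1 = 0 ∧ f.1 = 0 ∧ p.2 = io.1 ∧ io.2 = jo.1 ∧ jo.2 = f.2 then 1 else 0) +
  (if p.1 = 1 ∧ f.1 = 1 ∧ p.2 = jo.1 ∧ jo.2 = io.1 ∧ io.2 = f.2 then 1 else 0)

/-- The contraction `|S_SWITCH⟩ ∗ (|U⟩⟩ ⊗ |V⟩⟩)`, a vector on `P ⊗ F`. -/
noncomputable def swLink {n : ℕ} (U V : Matrix (Dix n) (Dix n) ℂ) : PFix n × PFix n → ℂ :=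
  fun pf => ∑ io : Sl n, ∑ jo : Sl n, swVec pf.1 io jo pf.2 * choiV U io * choiV V jo

/-- The contraction `|C⟩ ∗ (|U_1⟩⟩ ⊗ ⋯ ⊗ |U_M⟩⟩ ⊗ |V_1⟩⟩ ⊗ ⋯ ⊗ |V_N⟩⟩)` of a vector on
`P ⊗ (⊗_{i=1}^M I_i ⊗ O_i) ⊗ (⊗_{j=1}^N I′_j ⊗ O′_j) ⊗ F`, a vector on `P ⊗ F`. -/
noncomputable def linkC2 {n M N : ℕ}
    (C : PFix n × (Fin M → Sl n) × (Fin N → Sl n) × PFix n → ℂ)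
    (U : Fin M → Matrix (Dix n) (Dix n) ℂ) (V : Fin N → Matrix (Dix n) (Dix n) ℂ) :
    PFix n × PFix n → ℂ :=
  fun pf => ∑ s : Fin M → Sl n, ∑ t : Fin N → Sl n,
    C (pf.1, s, t, pf.2) * (∏ i, choiV (U i) (s i)) * ∏ j, choiV (V j) (t j)


section SpanUnitary
variable {ι : Type*} [Fintype ι] [DecidableEq ι]

lemma diag_unitary (v : ι → ℂ) (hv : ∀ i, v i * star (v i) = 1) :
    Matrix.diagonal v ∈ Matrix.unitaryGroup ι ℂ := by
  rw [Matrix.mem_unitaryGroup_iff]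
  have : star (Matrix.diagonal v) = Matrix.diagonal (star v) := Matrix.diagonal_conjTranspose v
  rw [this, Matrix.diagonal_mul_diagonal]
  have : (fun i => v i * star v i) = fun _ => (1 : ℂ) := funext fun i => hv i
  rw [this, Matrix.diagonal_one]

lemma stdBasis_diag_mem_span (a : ι) :
    Matrix.single a a (1 : ℂ) ∈
      Submodule.span ℂ (Matrix.unitaryGroup ι ℂ : Set (Matrix ι ι ℂ)) := by
  have h1 : (1 : Matrix ι ι ℂ) ∈ Matrix.unitaryGroup ι ℂ := Submonoid.one_mem _
  have h2 : Matrix.diagonal (fun c => if c = a then (1:ℂ) else -1) ∈ Matrix.unitaryGroup ι ℂ := by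
    apply diag_unitary
    intro i
    by_cases h : i = a <;> simp [h]
  have key : Matrix.single a a (1 : ℂ) =
      (2⁻¹ : ℂ) • ((1 : Matrix ι ι ℂ) + Matrix.diagonal (fun c => if c = a then (1:ℂ) else -1)) := by
    ext i j
    simp only [Matrix.single, Matrix.of_apply, Matrix.smul_apply, Matrix.add_apply,
      Matrix.one_apply, Matrix.diagonal_apply, smul_eq_mul]
    by_cases hij : i = j
    · subst hij
      by_cases hia : i = a
      · subst hia; simp; norm_num
      · simp [hia, Ne.symm hia]
    · have : ¬ (a = i ∧ a = j) := fun ⟨h1', h2'⟩ => hij (h1'.symm.trans h2')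
      simp [hij, this]
  rw [key]
  exact Submodule.smul_mem _ _ (Submodule.add_mem _ (Submodule.subset_span h1)
    (Submodule.subset_span h2))

lemma diagonal_mem_span (v : ι → ℂ) :
    Matrix.diagonal v ∈
      Submodule.span ℂ (Matrix.unitaryGroup ι ℂ : Set (Matrix ι ι ℂ)) := by
  have key : Matrix.diagonal v = ∑ a : ι, v a • Matrix.single a a (1 : ℂ) := by
    ext i j
    simp only [Matrix.diagonal_apply, Matrix.sum_apply, Matrix.smul_apply,
      Matrix.single, Matrix.of_apply, smul_eq_mul, mul_ite, mul_one, mul_zero]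
    rw [Finset.sum_eq_single i]
    · by_cases h : i = j <;> simp [h, eq_comm]
    · intro b _ hb
      rw [if_neg (fun hc : b = i ∧ b = j => hb hc.1)]
    · simp
  rw [key]
  exact Submodule.sum_mem _ fun a _ => Submodule.smul_mem _ _ (stdBasis_diag_mem_span a)

lemma permSign_unitary (π : Equiv.Perm ι) (ε : ι → ℂ) (hε : ∀ i, ε i = 1 ∨ ε i = -1) :
    (Matrix.of fun i j => if j = π i then ε i else 0) ∈ Matrix.unitaryGroup ι ℂ := by
  rw [Matrix.mem_unitaryGroup_iff]
  ext i j
  simp only [Matrix.mul_apply, Matrix.star_apply, Matrix.of_apply, Matrix.one_apply]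
  rw [Finset.sum_eq_single (π i)]
  · simp only [if_pos rfl]
    by_cases h : i = j
    · subst h
      simp only [if_pos rfl]
      rcases hε i with h1 | h1 <;> simp [h1]
    · have : π i ≠ π j := fun hc => h (π.injective hc)
      rw [if_neg this]
      simp [h]
  · intro b _ hb
    rw [if_neg hb, zero_mul]
  · simp

lemma stdBasis_mem_span (a b : ι) (c : ℂ) :
    Matrix.single a b c ∈
      Submodule.span ℂ (Matrix.unitaryGroup ι ℂ : Set (Matrix ι ι ℂ)) := by
  have base : Matrix.single a b (1 : ℂ) ∈
      Submodule.span ℂ (Matrix.unitaryGroup ι ℂ : Set (Matrix ι ι ℂ)) := by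
    by_cases hab : a = b
    · subst hab; exact stdBasis_diag_mem_span a
    · set P : Matrix ι ι ℂ := Matrix.of fun i j => if j = Equiv.swap a b i then (1:ℂ) else 0
        with hP
      set Q : Matrix ι ι ℂ :=
        Matrix.of fun i j => if j = Equiv.swap a b i then (if i = b then (-1:ℂ) else 1) else 0
        with hQ
      have hPme : P ∈ Matrix.unitaryGroup ι ℂ := permSign_unitary _ _ (fun _ => Or.inl rfl)
      have hQme : Q ∈ Matrix.unitaryGroup ι ℂ := by
        apply permSign_unitary
        intro i
        by_cases h : i = b <;> simp [h]
      have key : Matrix.single a b (1 : ℂ) =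
          (2⁻¹ : ℂ) • (P + Q) - Matrix.diagonal (fun c => if c = a ∨ c = b then 0 else 1) := by
        ext i j
        simp only [Matrix.single, Matrix.sub_apply, Matrix.smul_apply, Matrix.add_apply,
          Matrix.of_apply, Matrix.diagonal_apply, hP, hQ, smul_eq_mul]
        by_cases hia : i = a
        · subst hia
          rw [Equiv.swap_apply_left]
          by_cases hjb : j = b
          · subst hjb
            simp [hab, Ne.symm hab]
            norm_num
          · rw [if_neg hjb, if_neg hjb,
              if_neg (fun h : i = i ∧ b = j => hjb h.2.symm)]
            rcases eq_or_ne i j with rfl | hij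
            · simp
            · rw [if_neg hij]; norm_num
        · by_cases hib : i = b
          · rw [hib, Equiv.swap_apply_right,
              if_neg (fun h : a = b ∧ b = j => hab h.1)]
            by_cases hja : j = a
            · rw [if_pos hja, if_pos hja, if_pos rfl,
                if_neg (fun h : b = j => hab (h.trans hja).symm)]
              norm_num
            · rw [if_neg hja, if_neg hja]
              rcases eq_or_ne b j with rfl | hbj
              · rw [if_pos rfl, if_pos (Or.inr rfl)]
                norm_num
              · rw [if_neg hbj]
                norm_num
          · rw [Equiv.swap_apply_of_ne_of_ne hia hib]
            have h1 : ¬ (a = i ∧ b = j) := fun h => hia h.1.symm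
            rw [if_neg h1]
            rcases eq_or_ne j i with rfl | hij
            · rw [if_pos rfl, if_pos rfl, if_pos rfl, if_neg hib,
                if_neg (by simp [hia, hib] : ¬ (j = a ∨ j = b))]
              norm_num
            · rw [if_neg hij, if_neg hij, if_neg (fun h : i = j => hij h.symm)]
              norm_num
      rw [key]
      exact Submodule.sub_mem _
        (Submodule.smul_mem _ _ (Submodule.add_mem _ (Submodule.subset_span hPme)
          (Submodule.subset_span hQme)))
        (diagonal_mem_span _)
  have : Matrix.single a b c = c • Matrix.single a b (1 : ℂ) := by
    rw [Matrix.smul_single, smul_eq_mul, mul_one]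
  rw [this]
  exact Submodule.smul_mem _ _ base

lemma span_unitary :
    Submodule.span ℂ (Matrix.unitaryGroup ι ℂ : Set (Matrix ι ι ℂ)) = ⊤ := by
  rw [eq_top_iff]
  intro A _
  rw [Matrix.matrix_eq_sum_single A]
  exact Submodule.sum_mem _ fun i _ => Submodule.sum_mem _ fun j _ => stdBasis_mem_span i j _

end SpanUnitary


lemma multilinear_vanish {κ X : Type*} [Fintype κ] [DecidableEq κ] [AddCommMonoid X]
    [Module ℂ X] (S : Set X) (hspan : Submodule.span ℂ S = ⊤) (Φ : (κ → X) → ℂ)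
    (hadd : ∀ W i x y, Φ (Function.update W i (x + y)) =
      Φ (Function.update W i x) + Φ (Function.update W i y))
    (hsmul : ∀ W i (c : ℂ) x, Φ (Function.update W i (c • x)) = c * Φ (Function.update W i x))
    (h0 : ∀ W, (∀ i, W i ∈ S) → Φ W = 0) : ∀ W, Φ W = 0 := by
  suffices h : ∀ A : Finset κ, ∀ W, (∀ i, i ∉ A → W i ∈ S) → Φ W = 0 by
    intro W
    exact h Finset.univ W (fun i hi => absurd (Finset.mem_univ i) hi)
  intro A
  induction A using Finset.induction_on with
  | empty => exact fun W hW => h0 W fun i => hW i (Finset.notMem_empty i)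
  | @insert i A hiA ih =>
    intro W hW
    have hWi : W i ∈ Submodule.span ℂ S := hspan ▸ Submodule.mem_top
    have key : ∀ x ∈ Submodule.span ℂ S, Φ (Function.update W i x) = 0 := by
      intro x hx
      induction hx using Submodule.span_induction with
      | mem x hxS =>
        refine ih _ (fun j hj => ?_)
        rcases eq_or_ne j i with rfl | hne
        · simpa using hxS
        · rw [Function.update_of_ne hne]
          exact hW j (by simp [hne, hj])
      | zero =>
        have h := hsmul W i 0 0
        rw [zero_smul, zero_mul] at h
        exact h
      | add x y hx hy px py => rw [hadd, px, py, add_zero]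
      | smul c x hx px => rw [hsmul, px, mul_zero]
    have h := key (W i) hWi
    rwa [Function.update_eq_self] at h

namespace Stmt4Aux

variable {n M N : ℕ}

lemma choiV_add (A B : Matrix (Dix n) (Dix n) ℂ) (x : Sl n) :
    choiV (A + B) x = choiV A x + choiV B x := rfl

lemma choiV_smul (c : ℂ) (A : Matrix (Dix n) (Dix n) ℂ) (x : Sl n) :
    choiV (c • A) x = c * choiV A x := rfl

lemma swLink_add_left (A B V : Matrix (Dix n) (Dix n) ℂ) (pf) :
    swLink (A + B) V pf = swLink A V pf + swLink B V pf := by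
  simp only [swLink, choiV_add, add_mul, mul_add, Finset.sum_add_distrib]

lemma swLink_smul_left (c : ℂ) (A V : Matrix (Dix n) (Dix n) ℂ) (pf) :
    swLink (c • A) V pf = c * swLink A V pf := by
  simp only [swLink, choiV_smul, Finset.mul_sum]
  refine Finset.sum_congr rfl fun io _ => Finset.sum_congr rfl fun jo _ => by ring

lemma swLink_add_right (U A B : Matrix (Dix n) (Dix n) ℂ) (pf) :
    swLink U (A + B) pf = swLink U A pf + swLink U B pf := by
  simp only [swLink, choiV_add, mul_add, Finset.sum_add_distrib]

lemma swLink_smul_right (c : ℂ) (U A : Matrix (Dix n) (Dix n) ℂ) (pf) :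
    swLink U (c • A) pf = c * swLink U A pf := by
  simp only [swLink, choiV_smul, Finset.mul_sum]
  refine Finset.sum_congr rfl fun io _ => Finset.sum_congr rfl fun jo _ => by ring

lemma prod_choiV_update (U : Fin M → Matrix (Dix n) (Dix n) ℂ) (m : Fin M)
    (z : Matrix (Dix n) (Dix n) ℂ) (s : Fin M → Sl n) :
    (∏ i, choiV (Function.update U m z i) (s i)) =
      choiV z (s m) * ∏ i ∈ Finset.univ \ {m}, choiV (U i) (s i) := by
  have h : (fun i => choiV (Function.update U m z i) (s i)) =
      Function.update (fun i => choiV (U i) (s i)) m (choiV z (s m)) := by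
    funext j
    rcases eq_or_ne j m with rfl | hne
    · simp
    · rw [Function.update_of_ne hne, Function.update_of_ne hne]
  calc (∏ i, choiV (Function.update U m z i) (s i))
      = ∏ i, Function.update (fun i => choiV (U i) (s i)) m (choiV z (s m)) i := by rw [h]
    _ = _ := Finset.prod_update_of_mem (Finset.mem_univ m) _ _

lemma linkC2_update_left (C : PFix n × (Fin M → Sl n) × (Fin N → Sl n) × PFix n → ℂ)
    (U : Fin M → Matrix (Dix n) (Dix n) ℂ) (V : Fin N → Matrix (Dix n) (Dix n) ℂ)
    (m : Fin M) (z : Matrix (Dix n) (Dix n) ℂ) (pf) :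
    linkC2 C (Function.update U m z) V pf =
      ∑ s : Fin M → Sl n, ∑ t : Fin N → Sl n, choiV z (s m) *
        (C (pf.1, s, t, pf.2) * (∏ i ∈ Finset.univ \ {m}, choiV (U i) (s i)) *
          ∏ j, choiV (V j) (t j)) := by
  unfold linkC2
  refine Finset.sum_congr rfl fun s _ => Finset.sum_congr rfl fun t _ => ?_
  rw [prod_choiV_update]
  ring

lemma prod_choiV_update' (V : Fin N → Matrix (Dix n) (Dix n) ℂ) (m : Fin N)
    (z : Matrix (Dix n) (Dix n) ℂ) (t : Fin N → Sl n) :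
    (∏ j, choiV (Function.update V m z j) (t j)) =
      choiV z (t m) * ∏ j ∈ Finset.univ \ {m}, choiV (V j) (t j) := by
  have h : (fun j => choiV (Function.update V m z j) (t j)) =
      Function.update (fun j => choiV (V j) (t j)) m (choiV z (t m)) := by
    funext j
    rcases eq_or_ne j m with rfl | hne
    · simp
    · rw [Function.update_of_ne hne, Function.update_of_ne hne]
  calc (∏ j, choiV (Function.update V m z j) (t j))
      = ∏ j, Function.update (fun j => choiV (V j) (t j)) m (choiV z (t m)) j := by rw [h]
    _ = _ := Finset.prod_update_of_mem (Finset.mem_univ m) _ _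

lemma linkC2_update_right (C : PFix n × (Fin M → Sl n) × (Fin N → Sl n) × PFix n → ℂ)
    (U : Fin M → Matrix (Dix n) (Dix n) ℂ) (V : Fin N → Matrix (Dix n) (Dix n) ℂ)
    (m : Fin N) (z : Matrix (Dix n) (Dix n) ℂ) (pf) :
    linkC2 C U (Function.update V m z) pf =
      ∑ s : Fin M → Sl n, ∑ t : Fin N → Sl n, choiV z (t m) *
        (C (pf.1, s, t, pf.2) * (∏ i, choiV (U i) (s i)) *
          ∏ j ∈ Finset.univ \ {m}, choiV (V j) (t j)) := by
  unfold linkC2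
  refine Finset.sum_congr rfl fun s _ => Finset.sum_congr rfl fun t _ => ?_
  rw [prod_choiV_update']
  ring

end Stmt4Aux


namespace Stmt4Aux2
variable {M N X : Type*} [DecidableEq M] [DecidableEq N]

def arg (W : M ⊕ N → X) (k : M) (l : N) : {i : M // i ≠ k} ⊕ {j : N // j ≠ l} → X :=
  Sum.elim (fun i => W (Sum.inl i.1)) (fun j => W (Sum.inr j.1))

lemma arg_update_inl_ne (W : M ⊕ N → X) (k : M) (l : N) (m : M) (hm : m ≠ k) (z : X) :
    arg (Function.update W (Sum.inl m) z) k l =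
      Function.update (arg W k l) (Sum.inl ⟨m, hm⟩) z := by
  funext idx
  rcases idx with i | j
  · show Function.update W (Sum.inl m) z (Sum.inl i.1) = _
    rcases eq_or_ne i ⟨m, hm⟩ with rfl | h
    · simp [arg]
    · rw [Function.update_of_ne (by exact fun hc => h (Subtype.ext (Sum.inl.inj hc))),
        Function.update_of_ne (fun hc => h (Sum.inl.inj hc))]
      rfl
  · show Function.update W (Sum.inl m) z (Sum.inr j.1) = _
    rw [Function.update_of_ne (by simp), Function.update_of_ne (by simp)]
    rfl

lemma arg_update_inl_eq (W : M ⊕ N → X) (k : M) (l : N) (z : X) :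
    arg (Function.update W (Sum.inl k) z) k l = arg W k l := by
  funext idx
  rcases idx with i | j
  · show Function.update W (Sum.inl k) z (Sum.inl i.1) = W (Sum.inl i.1)
    exact Function.update_of_ne (by simpa using i.2) _ _
  · show Function.update W (Sum.inl k) z (Sum.inr j.1) = W (Sum.inr j.1)
    exact Function.update_of_ne (by simp) _ _

lemma arg_update_inr_ne (W : M ⊕ N → X) (k : M) (l : N) (m : N) (hm : m ≠ l) (z : X) :
    arg (Function.update W (Sum.inr m) z) k l =
      Function.update (arg W k l) (Sum.inr ⟨m, hm⟩) z := by
  funext idx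
  rcases idx with i | j
  · show Function.update W (Sum.inr m) z (Sum.inl i.1) = _
    rw [Function.update_of_ne (by simp), Function.update_of_ne (by simp)]
    rfl
  · show Function.update W (Sum.inr m) z (Sum.inr j.1) = _
    rcases eq_or_ne j ⟨m, hm⟩ with rfl | h
    · simp [arg]
    · rw [Function.update_of_ne (by exact fun hc => h (Subtype.ext (Sum.inr.inj hc))),
        Function.update_of_ne (fun hc => h (Sum.inr.inj hc))]
      rfl

lemma arg_update_inr_eq (W : M ⊕ N → X) (k : M) (l : N) (z : X) :
    arg (Function.update W (Sum.inr l) z) k l = arg W k l := by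
  funext idx
  rcases idx with i | j
  · show Function.update W (Sum.inr l) z (Sum.inl i.1) = W (Sum.inl i.1)
    exact Function.update_of_ne (by simp) _ _
  · show Function.update W (Sum.inr l) z (Sum.inr j.1) = W (Sum.inr j.1)
    exact Function.update_of_ne (by simpa using j.2) _ _

lemma funL_update_inl (W : M ⊕ N → X) (m : M) (z : X) :
    (fun i => Function.update W (Sum.inl m) z (Sum.inl i)) =
      Function.update (fun i => W (Sum.inl i)) m z := by
  funext i
  rcases eq_or_ne i m with rfl | h
  · simp
  · rw [Function.update_of_ne (by simp [h]), Function.update_of_ne h]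

lemma funR_update_inl (W : M ⊕ N → X) (m : M) (z : X) :
    (fun j => Function.update W (Sum.inl m) z (Sum.inr j)) = fun j => W (Sum.inr j) := by
  funext j
  rw [Function.update_of_ne (by simp)]

lemma funR_update_inr (W : M ⊕ N → X) (m : N) (z : X) :
    (fun j => Function.update W (Sum.inr m) z (Sum.inr j)) =
      Function.update (fun j => W (Sum.inr j)) m z := by
  funext j
  rcases eq_or_ne j m with rfl | h
  · simp
  · rw [Function.update_of_ne (by simp [h]), Function.update_of_ne h]

lemma funL_update_inr (W : M ⊕ N → X) (m : N) (z : X) :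
    (fun i => Function.update W (Sum.inr m) z (Sum.inl i)) = fun i => W (Sum.inl i) := by
  funext i
  rw [Function.update_of_ne (by simp)]

end Stmt4Aux2


namespace Stmt4Aux
variable {n M N : ℕ}

lemma linkC2_add_left (C : PFix n × (Fin M → Sl n) × (Fin N → Sl n) × PFix n → ℂ)
    (U : Fin M → Matrix (Dix n) (Dix n) ℂ) (V : Fin N → Matrix (Dix n) (Dix n) ℂ)
    (m : Fin M) (x y : Matrix (Dix n) (Dix n) ℂ) (pf) :
    linkC2 C (Function.update U m (x + y)) V pf =
      linkC2 C (Function.update U m x) V pf + linkC2 C (Function.update U m y) V pf := by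
  rw [linkC2_update_left, linkC2_update_left, linkC2_update_left, ← Finset.sum_add_distrib]
  refine Finset.sum_congr rfl fun s _ => ?_
  rw [← Finset.sum_add_distrib]
  refine Finset.sum_congr rfl fun t _ => ?_
  rw [choiV_add]; ring

lemma linkC2_smul_left (C : PFix n × (Fin M → Sl n) × (Fin N → Sl n) × PFix n → ℂ)
    (U : Fin M → Matrix (Dix n) (Dix n) ℂ) (V : Fin N → Matrix (Dix n) (Dix n) ℂ)
    (m : Fin M) (c : ℂ) (x : Matrix (Dix n) (Dix n) ℂ) (pf) :
    linkC2 C (Function.update U m (c • x)) V pf =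
      c * linkC2 C (Function.update U m x) V pf := by
  rw [linkC2_update_left, linkC2_update_left, Finset.mul_sum]
  refine Finset.sum_congr rfl fun s _ => ?_
  rw [Finset.mul_sum]
  refine Finset.sum_congr rfl fun t _ => ?_
  rw [choiV_smul]; ring

lemma linkC2_add_right (C : PFix n × (Fin M → Sl n) × (Fin N → Sl n) × PFix n → ℂ)
    (U : Fin M → Matrix (Dix n) (Dix n) ℂ) (V : Fin N → Matrix (Dix n) (Dix n) ℂ)
    (m : Fin N) (x y : Matrix (Dix n) (Dix n) ℂ) (pf) :
    linkC2 C U (Function.update V m (x + y)) pf =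
      linkC2 C U (Function.update V m x) pf + linkC2 C U (Function.update V m y) pf := by
  rw [linkC2_update_right, linkC2_update_right, linkC2_update_right, ← Finset.sum_add_distrib]
  refine Finset.sum_congr rfl fun s _ => ?_
  rw [← Finset.sum_add_distrib]
  refine Finset.sum_congr rfl fun t _ => ?_
  rw [choiV_add]; ring

lemma linkC2_smul_right (C : PFix n × (Fin M → Sl n) × (Fin N → Sl n) × PFix n → ℂ)
    (U : Fin M → Matrix (Dix n) (Dix n) ℂ) (V : Fin N → Matrix (Dix n) (Dix n) ℂ)
    (m : Fin N) (c : ℂ) (x : Matrix (Dix n) (Dix n) ℂ) (pf) :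
    linkC2 C U (Function.update V m (c • x)) pf =
      c * linkC2 C U (Function.update V m x) pf := by
  rw [linkC2_update_right, linkC2_update_right, Finset.mul_sum]
  refine Finset.sum_congr rfl fun s _ => ?_
  rw [Finset.mul_sum]
  refine Finset.sum_congr rfl fun t _ => ?_
  rw [choiV_smul]; ring

open Stmt4Aux2 in
/-- The difference between the two sides of the identity, as a function of the full
tuple of matrices. -/
noncomputable def Phi (C : PFix n × (Fin M → Sl n) × (Fin N → Sl n) × PFix n → ℂ)
    (L : ∀ (k : Fin M) (l : Fin N), MultilinearMap ℂ
      (fun _ : {i : Fin M // i ≠ k} ⊕ {j : Fin N // j ≠ l} => Matrix (Dix n) (Dix n) ℂ) ℂ)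
    (pf : PFix n × PFix n) (W : Fin M ⊕ Fin N → Matrix (Dix n) (Dix n) ℂ) : ℂ :=
  linkC2 C (fun i => W (Sum.inl i)) (fun j => W (Sum.inr j)) pf -
    ∑ k, ∑ l, L k l (arg W k l) * swLink (W (Sum.inl k)) (W (Sum.inr l)) pf

open Stmt4Aux2 in
lemma Phi_update_add (C : PFix n × (Fin M → Sl n) × (Fin N → Sl n) × PFix n → ℂ)
    (L : ∀ (k : Fin M) (l : Fin N), MultilinearMap ℂ
      (fun _ : {i : Fin M // i ≠ k} ⊕ {j : Fin N // j ≠ l} => Matrix (Dix n) (Dix n) ℂ) ℂ)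
    (pf : PFix n × PFix n) (W : Fin M ⊕ Fin N → Matrix (Dix n) (Dix n) ℂ)
    (idx : Fin M ⊕ Fin N) (x y : Matrix (Dix n) (Dix n) ℂ) :
    Phi C L pf (Function.update W idx (x + y)) =
      Phi C L pf (Function.update W idx x) + Phi C L pf (Function.update W idx y) := by
  classical
  rcases idx with m | m
  · have hA : ∀ z, linkC2 C (fun i => Function.update W (Sum.inl m) z (Sum.inl i))
        (fun j => Function.update W (Sum.inl m) z (Sum.inr j)) pf =
        linkC2 C (Function.update (fun i => W (Sum.inl i)) m z) (fun j => W (Sum.inr j)) pf := by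
      intro z
      rw [funL_update_inl, funR_update_inl]
    have hR : ∀ (k : Fin M) (l : Fin N),
        L k l (arg (Function.update W (Sum.inl m) (x + y)) k l) *
          swLink (Function.update W (Sum.inl m) (x + y) (Sum.inl k))
            (Function.update W (Sum.inl m) (x + y) (Sum.inr l)) pf =
        L k l (arg (Function.update W (Sum.inl m) x) k l) *
          swLink (Function.update W (Sum.inl m) x (Sum.inl k))
            (Function.update W (Sum.inl m) x (Sum.inr l)) pf +
        L k l (arg (Function.update W (Sum.inl m) y) k l) *
          swLink (Function.update W (Sum.inl m) y (Sum.inl k))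
            (Function.update W (Sum.inl m) y (Sum.inr l)) pf := by
      intro k l
      rcases eq_or_ne m k with rfl | hmk
      · rw [arg_update_inl_eq, arg_update_inl_eq, arg_update_inl_eq,
          Function.update_self, Function.update_self, Function.update_self,
          Function.update_of_ne (by simp), Function.update_of_ne (by simp),
          Function.update_of_ne (by simp), swLink_add_left, mul_add]
      · have hkm : (Sum.inl k : Fin M ⊕ Fin N) ≠ Sum.inl m :=
          fun hc => hmk (Sum.inl.inj hc).symm
        rw [arg_update_inl_ne W k l m hmk, arg_update_inl_ne W k l m hmk,
          arg_update_inl_ne W k l m hmk,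
          Function.update_of_ne hkm, Function.update_of_ne hkm, Function.update_of_ne hkm,
          Function.update_of_ne (by simp), Function.update_of_ne (by simp),
          Function.update_of_ne (by simp),
          (L k l).map_update_add, add_mul]
    unfold Phi
    rw [hA, hA, hA, linkC2_add_left]
    rw [Finset.sum_congr rfl fun k _ => Finset.sum_congr rfl fun l _ => hR k l]
    rw [Finset.sum_congr rfl fun (k : Fin M) _ =>
      (Finset.sum_add_distrib (s := Finset.univ)), Finset.sum_add_distrib]
    ring
  · have hA : ∀ z, linkC2 C (fun i => Function.update W (Sum.inr m) z (Sum.inl i))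
        (fun j => Function.update W (Sum.inr m) z (Sum.inr j)) pf =
        linkC2 C (fun i => W (Sum.inl i)) (Function.update (fun j => W (Sum.inr j)) m z) pf := by
      intro z
      rw [funL_update_inr, funR_update_inr]
    have hR : ∀ (k : Fin M) (l : Fin N),
        L k l (arg (Function.update W (Sum.inr m) (x + y)) k l) *
          swLink (Function.update W (Sum.inr m) (x + y) (Sum.inl k))
            (Function.update W (Sum.inr m) (x + y) (Sum.inr l)) pf =
        L k l (arg (Function.update W (Sum.inr m) x) k l) *
          swLink (Function.update W (Sum.inr m) x (Sum.inl k))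
            (Function.update W (Sum.inr m) x (Sum.inr l)) pf +
        L k l (arg (Function.update W (Sum.inr m) y) k l) *
          swLink (Function.update W (Sum.inr m) y (Sum.inl k))
            (Function.update W (Sum.inr m) y (Sum.inr l)) pf := by
      intro k l
      rcases eq_or_ne m l with rfl | hml
      · rw [arg_update_inr_eq, arg_update_inr_eq, arg_update_inr_eq,
          Function.update_self, Function.update_self, Function.update_self,
          Function.update_of_ne (by simp), Function.update_of_ne (by simp),
          Function.update_of_ne (by simp), swLink_add_right, mul_add]
      · have hlm : (Sum.inr l : Fin M ⊕ Fin N) ≠ Sum.inr m :=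
          fun hc => hml (Sum.inr.inj hc).symm
        rw [arg_update_inr_ne W k l m hml, arg_update_inr_ne W k l m hml,
          arg_update_inr_ne W k l m hml,
          Function.update_of_ne hlm, Function.update_of_ne hlm, Function.update_of_ne hlm,
          Function.update_of_ne (by simp), Function.update_of_ne (by simp),
          Function.update_of_ne (by simp),
          (L k l).map_update_add, add_mul]
    unfold Phi
    rw [hA, hA, hA, linkC2_add_right]
    rw [Finset.sum_congr rfl fun k _ => Finset.sum_congr rfl fun l _ => hR k l]
    rw [Finset.sum_congr rfl fun (k : Fin M) _ =>
      (Finset.sum_add_distrib (s := Finset.univ)), Finset.sum_add_distrib]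
    ring

open Stmt4Aux2 in
lemma Phi_update_smul (C : PFix n × (Fin M → Sl n) × (Fin N → Sl n) × PFix n → ℂ)
    (L : ∀ (k : Fin M) (l : Fin N), MultilinearMap ℂ
      (fun _ : {i : Fin M // i ≠ k} ⊕ {j : Fin N // j ≠ l} => Matrix (Dix n) (Dix n) ℂ) ℂ)
    (pf : PFix n × PFix n) (W : Fin M ⊕ Fin N → Matrix (Dix n) (Dix n) ℂ)
    (idx : Fin M ⊕ Fin N) (c : ℂ) (x : Matrix (Dix n) (Dix n) ℂ) :
    Phi C L pf (Function.update W idx (c • x)) = c * Phi C L pf (Function.update W idx x) := by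
  classical
  rcases idx with m | m
  · have hA : ∀ z, linkC2 C (fun i => Function.update W (Sum.inl m) z (Sum.inl i))
        (fun j => Function.update W (Sum.inl m) z (Sum.inr j)) pf =
        linkC2 C (Function.update (fun i => W (Sum.inl i)) m z) (fun j => W (Sum.inr j)) pf := by
      intro z
      rw [funL_update_inl, funR_update_inl]
    have hR : ∀ (k : Fin M) (l : Fin N),
        L k l (arg (Function.update W (Sum.inl m) (c • x)) k l) *
          swLink (Function.update W (Sum.inl m) (c • x) (Sum.inl k))
            (Function.update W (Sum.inl m) (c • x) (Sum.inr l)) pf =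
        c * (L k l (arg (Function.update W (Sum.inl m) x) k l) *
          swLink (Function.update W (Sum.inl m) x (Sum.inl k))
            (Function.update W (Sum.inl m) x (Sum.inr l)) pf) := by
      intro k l
      rcases eq_or_ne m k with rfl | hmk
      · rw [arg_update_inl_eq, arg_update_inl_eq,
          Function.update_self, Function.update_self,
          Function.update_of_ne (by simp), Function.update_of_ne (by simp),
          swLink_smul_left]
        ring
      · have hkm : (Sum.inl k : Fin M ⊕ Fin N) ≠ Sum.inl m :=
          fun hc => hmk (Sum.inl.inj hc).symm
        rw [arg_update_inl_ne W k l m hmk, arg_update_inl_ne W k l m hmk,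
          Function.update_of_ne hkm, Function.update_of_ne hkm,
          Function.update_of_ne (by simp), Function.update_of_ne (by simp),
          (L k l).map_update_smul]
        simp only [smul_eq_mul]
        ring
    unfold Phi
    rw [hA, hA, linkC2_smul_left]
    rw [Finset.sum_congr rfl fun k _ => Finset.sum_congr rfl fun l _ => hR k l]
    rw [Finset.sum_congr rfl fun (k : Fin M) _ =>
      (Finset.mul_sum Finset.univ _ c).symm, ← Finset.mul_sum]
    ring
  · have hA : ∀ z, linkC2 C (fun i => Function.update W (Sum.inr m) z (Sum.inl i))
        (fun j => Function.update W (Sum.inr m) z (Sum.inr j)) pf =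
        linkC2 C (fun i => W (Sum.inl i)) (Function.update (fun j => W (Sum.inr j)) m z) pf := by
      intro z
      rw [funL_update_inr, funR_update_inr]
    have hR : ∀ (k : Fin M) (l : Fin N),
        L k l (arg (Function.update W (Sum.inr m) (c • x)) k l) *
          swLink (Function.update W (Sum.inr m) (c • x) (Sum.inl k))
            (Function.update W (Sum.inr m) (c • x) (Sum.inr l)) pf =
        c * (L k l (arg (Function.update W (Sum.inr m) x) k l) *
          swLink (Function.update W (Sum.inr m) x (Sum.inl k))
            (Function.update W (Sum.inr m) x (Sum.inr l)) pf) := by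
      intro k l
      rcases eq_or_ne m l with rfl | hml
      · rw [arg_update_inr_eq, arg_update_inr_eq,
          Function.update_self, Function.update_self,
          Function.update_of_ne (by simp), Function.update_of_ne (by simp),
          swLink_smul_right]
        ring
      · have hlm : (Sum.inr l : Fin M ⊕ Fin N) ≠ Sum.inr m :=
          fun hc => hml (Sum.inr.inj hc).symm
        rw [arg_update_inr_ne W k l m hml, arg_update_inr_ne W k l m hml,
          Function.update_of_ne hlm, Function.update_of_ne hlm,
          Function.update_of_ne (by simp), Function.update_of_ne (by simp),
          (L k l).map_update_smul]
        simp only [smul_eq_mul]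
        ring
    unfold Phi
    rw [hA, hA, linkC2_smul_right]
    rw [Finset.sum_congr rfl fun k _ => Finset.sum_congr rfl fun l _ => hR k l]
    rw [Finset.sum_congr rfl fun (k : Fin M) _ =>
      (Finset.mul_sum Finset.univ _ c).symm, ← Finset.mul_sum]
    ring

end Stmt4Aux

/-- if `|C⟩ ∗ (⊗_i |U_i⟩⟩ ⊗ ⊗_j |V_j⟩⟩) = Σ_{k,l} ξ̃_{kl} |S⟩ ∗ (|U_k⟩⟩ ⊗ |V_l⟩⟩)`
for all `n`-qubit unitaries, with each `ξ̃_{kl}` independent of `U_k, V_l` and the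
restriction to unitaries of a function multilinear in `(U_i)_{i≠k}` and `(V_j)_{j≠l}`,
then `|C⟩ = Σ_{k,l} |S_SWITCH⟩^{P F I_k O_k I′_l O′_l} ⊗ |ξ̃_{kl}⟩` for fixed vectors
`|ξ̃_{kl}⟩` on the remaining tensor factors (stated componentwise, with the canonical
reordering of factors). -/
theorem stmt_4 (n M N : ℕ) (hM : 1 ≤ M) (hN : 1 ≤ N)
    (C : PFix n × (Fin M → Sl n) × (Fin N → Sl n) × PFix n → ℂ)
    (ξ : Fin M → Fin N → (Fin M → Matrix (Dix n) (Dix n) ℂ) →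
      (Fin N → Matrix (Dix n) (Dix n) ℂ) → ℂ)
    (hindep : ∀ (k : Fin M) (l : Fin N) U U' V V',
      (∀ i, i ≠ k → U i = U' i) → (∀ j, j ≠ l → V j = V' j) → ξ k l U V = ξ k l U' V')
    (hlin : ∀ (k : Fin M) (l : Fin N),
      ∃ L : MultilinearMap ℂ
          (fun _ : {i : Fin M // i ≠ k} ⊕ {j : Fin N // j ≠ l} =>
            Matrix (Dix n) (Dix n) ℂ) ℂ,
        ∀ (U : Fin M → Matrix (Dix n) (Dix n) ℂ) (V : Fin N → Matrix (Dix n) (Dix n) ℂ),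
          (∀ i, U i ∈ Matrix.unitaryGroup (Dix n) ℂ) →
          (∀ j, V j ∈ Matrix.unitaryGroup (Dix n) ℂ) →
          ξ k l U V = L (Sum.elim (fun i => U i.1) (fun j => V j.1)))
    (heq : ∀ (U : Fin M → Matrix (Dix n) (Dix n) ℂ) (V : Fin N → Matrix (Dix n) (Dix n) ℂ),
      (∀ i, U i ∈ Matrix.unitaryGroup (Dix n) ℂ) →
      (∀ j, V j ∈ Matrix.unitaryGroup (Dix n) ℂ) →
      linkC2 C U V = fun pf => ∑ k, ∑ l, ξ k l U V * swLink (U k) (V l) pf) :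
    ∃ ξv : (k : Fin M) → (l : Fin N) →
      (({i : Fin M // i ≠ k} → Sl n) × ({j : Fin N // j ≠ l} → Sl n)) → ℂ,
      ∀ (p : PFix n) (s : Fin M → Sl n) (t : Fin N → Sl n) (f : PFix n),
        C (p, s, t, f) =
          ∑ k, ∑ l, swVec p (s k) (t l) f * ξv k l (fun i => s i.1, fun j => t j.1) := by
  classical
  choose L hL using hlin
  refine ⟨fun k l st => L k l (Sum.elim
      (fun i => Matrix.single (st.1 i).2 (st.1 i).1 1)
      (fun j => Matrix.single (st.2 j).2 (st.2 j).1 1)), ?_⟩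
  intro p s t f
  have hvanish : ∀ W, Stmt4Aux.Phi C L (p, f) W = 0 := by
    apply multilinear_vanish (Matrix.unitaryGroup (Dix n) ℂ : Set _) span_unitary
    · exact fun W i x y => Stmt4Aux.Phi_update_add C L (p, f) W i x y
    · exact fun W i c x => Stmt4Aux.Phi_update_smul C L (p, f) W i c x
    · intro W hW
      have hU : ∀ i, (fun i => W (Sum.inl i)) i ∈ Matrix.unitaryGroup (Dix n) ℂ :=
        fun i => hW (Sum.inl i)
      have hV : ∀ j, (fun j => W (Sum.inr j)) j ∈ Matrix.unitaryGroup (Dix n) ℂ :=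
        fun j => hW (Sum.inr j)
      have h1 := congrFun (heq _ _ hU hV) (p, f)
      unfold Stmt4Aux.Phi
      rw [h1, sub_eq_zero]
      refine Finset.sum_congr rfl fun k _ => Finset.sum_congr rfl fun l _ => ?_
      rw [hL k l _ _ hU hV]
      rfl
  have hW0 := hvanish (Sum.elim
    (fun i => Matrix.single (s i).2 (s i).1 1)
    (fun j => Matrix.single (t j).2 (t j).1 1))
  have hstd : ∀ (y x : Sl n), choiV (Matrix.single y.2 y.1 (1:ℂ)) x
      = if x = y then 1 else 0 := by
    intro y x
    show (if y.2 = x.2 ∧ y.1 = x.1 then (1:ℂ) else 0) = _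
    by_cases h : x = y
    · subst h; simp
    · rw [if_neg (fun hc => h (Prod.ext_iff.mpr ⟨hc.2.symm, hc.1.symm⟩)), if_neg h]
  have hprodS : ∀ s' : Fin M → Sl n,
      (∏ i, choiV (Matrix.single (s i).2 (s i).1 (1:ℂ)) (s' i)) =
        if s' = s then 1 else 0 := by
    intro s'
    rcases eq_or_ne s' s with rfl | h
    · simp [hstd]
    · rw [if_neg h]
      obtain ⟨i, hi⟩ := Function.ne_iff.mp h
      exact Finset.prod_eq_zero (Finset.mem_univ i) (by rw [hstd, if_neg hi])
  have hprodT : ∀ t' : Fin N → Sl n,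
      (∏ j, choiV (Matrix.single (t j).2 (t j).1 (1:ℂ)) (t' j)) =
        if t' = t then 1 else 0 := by
    intro t'
    rcases eq_or_ne t' t with rfl | h
    · simp [hstd]
    · rw [if_neg h]
      obtain ⟨j, hj⟩ := Function.ne_iff.mp h
      exact Finset.prod_eq_zero (Finset.mem_univ j) (by rw [hstd, if_neg hj])
  have hlink : linkC2 C (fun i => Matrix.single (s i).2 (s i).1 (1:ℂ))
      (fun j => Matrix.single (t j).2 (t j).1 (1:ℂ)) (p, f) = C (p, s, t, f) := by
    unfold linkC2
    rw [Finset.sum_congr rfl fun s' _ => Finset.sum_congr rfl fun t' _ => by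
      rw [hprodS s', hprodT t']]
    have hterm : ∀ (s' : Fin M → Sl n) (t' : Fin N → Sl n),
        C ((p, f).1, s', t', (p, f).2) * (if s' = s then (1:ℂ) else 0) *
          (if t' = t then (1:ℂ) else 0) =
        if t' = t then (if s' = s then C (p, s, t, f) else 0) else 0 := by
      intro s' t'
      by_cases h1 : s' = s <;> by_cases h2 : t' = t <;> simp [h1, h2]
    rw [Finset.sum_congr rfl fun s' _ => Finset.sum_congr rfl fun t' _ => hterm s' t']
    rw [Finset.sum_congr rfl fun s' _ =>
      Finset.sum_ite_eq' Finset.univ t (fun _ => if s' = s then C (p, s, t, f) else 0),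
      Finset.sum_congr rfl fun s' _ => if_pos (Finset.mem_univ t),
      Finset.sum_ite_eq' Finset.univ s (fun _ => C (p, s, t, f)),
      if_pos (Finset.mem_univ s)]
  have hswl : ∀ (k : Fin M) (l : Fin N),
      swLink (Matrix.single (s k).2 (s k).1 (1:ℂ))
        (Matrix.single (t l).2 (t l).1 (1:ℂ)) (p, f) = swVec p (s k) (t l) f := by
    intro k l
    unfold swLink
    have hterm : ∀ io jo : Sl n,
        swVec (p, f).1 io jo (p, f).2 *
          choiV (Matrix.single (s k).2 (s k).1 (1:ℂ)) io *
          choiV (Matrix.single (t l).2 (t l).1 (1:ℂ)) jo =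
        if jo = t l then (if io = s k then swVec p (s k) (t l) f else 0) else 0 := by
      intro io jo
      rw [hstd, hstd]
      by_cases h1 : io = s k <;> by_cases h2 : jo = t l <;> simp [h1, h2]
    rw [Finset.sum_congr rfl fun io _ => Finset.sum_congr rfl fun jo _ => hterm io jo]
    rw [Finset.sum_congr rfl fun io _ =>
      Finset.sum_ite_eq' Finset.univ (t l) (fun _ => if io = s k then swVec p (s k) (t l) f else 0),
      Finset.sum_congr rfl fun io _ => if_pos (Finset.mem_univ (t l)),
      Finset.sum_ite_eq' Finset.univ (s k) (fun _ => swVec p (s k) (t l) f),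
      if_pos (Finset.mem_univ (s k))]
  unfold Stmt4Aux.Phi at hW0
  simp only [Stmt4Aux2.arg, Sum.elim_inl, Sum.elim_inr] at hW0
  rw [hlink] at hW0
  rw [Finset.sum_congr rfl fun k _ => Finset.sum_congr rfl fun l _ => by rw [hswl k l]] at hW0
  rw [sub_eq_zero] at hW0
  rw [hW0]
  refine Finset.sum_congr rfl fun k _ => Finset.sum_congr rfl fun l _ => ?_
  rw [mul_comm]
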